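/- Let (N_i)_{i∈I} be the multiplication matrices of a fusion ring over ℂ with duality involution * satisfying N_i^T = N_{i*}, and suppose (d_i) is a common eigenvector: N_i d = (s_{im}/s_{0m}) d for some column v_m of a symmetric matrix S with S² the permutation matrix of *. If |v_m|² ≠ 0, then s_{i*m} = conjugate(s_{im}) for all i. Consequently the S-matrix of a modular category over ℂ is unitary. -/

import Mathlib

/-- Unitarity of the S-matrix of a modular category: given the Verlinde-type data
(symmetric `S` with `∑_j s_{i*j} s_{jl} = δ_{il}`, nonnegative real matrices `N i` with
`N iᵀ = N (σ i)`, and columns of `S` as common eigenvectors with eigenvalues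
`s_{im}/s_{0m}`), if every column has nonzero norm then `s_{σ(i) j} = conj (s_{ij})` for
all `i, j`, and consequently `S` is unitary. -/
theorem stmt4 (I : Type*) [Fintype I] [DecidableEq I] (z : I)
    (σ : I → I) (hσ : ∀ i, σ (σ i) = i)
    (S : Matrix I I ℂ)
    (hsym : ∀ i j, S i j = S j i)
    (horth : ∀ i l, ∑ j, S (σ i) j * S j l = if i = l then 1 else 0)
    (hz : ∀ m, S z m ≠ 0)
    (N : I → Matrix I I ℝ)
    (hN : ∀ i j k, 0 ≤ N i j k)
    (hNT : ∀ i, (N i).transpose = N (σ i))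
    (hVerlinde : ∀ i m,
      ((N i).map (fun x : ℝ => (x : ℂ))).mulVec (fun j => S j m) =
        (S i m / S z m) • fun j => S j m)
    (hcol : ∀ m, (∑ j, Complex.normSq (S j m)) ≠ 0) :
    (∀ i m, S (σ i) m = starRingEnd ℂ (S i m)) ∧ S * S.conjTranspose = 1 := by
  classical
  -- the permutation matrix of σ
  set P : Matrix I I ℂ := Matrix.of (fun i j => if σ i = j then (1:ℂ) else 0) with hP
  have hsq : S * S = P := by
    ext i l
    have h := horth (σ i) l
    rw [hσ] at h
    simpa [Matrix.mul_apply, hP] using h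
  have hcomm : S * P = P * S := by
    rw [← hsq, ← mul_assoc]
  have key : ∀ a b, S (σ a) b = S a (σ b) := by
    intro a b
    have hcond : ∀ j, (σ j = b) = (j = σ b) := by
      intro j
      apply propext
      constructor
      · intro h; rw [← h, hσ]
      · intro h; rw [h, hσ]
    have h1 : (P * S) a b = S (σ a) b := by
      simp [Matrix.mul_apply, hP]
    have h2 : (S * P) a b = S a (σ b) := by
      simp [Matrix.mul_apply, hP, hcond]
    rw [← h1, ← h2, hcomm]
  -- the eigenvalue equation, entrywise
  have heig : ∀ i m k, ∑ j, ((N i k j : ℝ) : ℂ) * S j m = (S i m / S z m) * S k m := by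
    intro i m k
    have := congrFun (hVerlinde i m) k
    simpa [Matrix.mulVec, dotProduct, Matrix.map_apply] using this
  -- Step 1: conj (S (σ i) m) * S z m = S i m * conj (S z m)
  have step1 : ∀ i m, (starRingEnd ℂ) (S (σ i) m) * S z m = S i m * (starRingEnd ℂ) (S z m) := by
    intro i m
    set rC : ℂ := ∑ j, (starRingEnd ℂ) (S j m) * S j m with hrC
    have hrCval : rC = ((∑ j, Complex.normSq (S j m) : ℝ) : ℂ) := by
      rw [hrC]
      push_cast
      exact Finset.sum_congr rfl fun j _ => (Complex.normSq_eq_conj_mul_self).symm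
    have hrC0 : rC ≠ 0 := by
      rw [hrCval]
      exact_mod_cast hcol m
    -- compute A := ∑ j, conj (S j m) * (N i applied to column) two ways
    have wayA : ∑ j, (starRingEnd ℂ) (S j m) * ∑ k, ((N i j k : ℝ) : ℂ) * S k m
        = (S i m / S z m) * rC := by
      have : ∀ j, ∑ k, ((N i j k : ℝ) : ℂ) * S k m = (S i m / S z m) * S j m :=
        fun j => heig i m j
      simp_rw [this]
      rw [hrC, Finset.mul_sum]
      exact Finset.sum_congr rfl fun j _ => by ring
    have wayB : ∑ j, (starRingEnd ℂ) (S j m) * ∑ k, ((N i j k : ℝ) : ℂ) * S k m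
        = (starRingEnd ℂ) (S (σ i) m / S z m) * rC := by
      simp_rw [Finset.mul_sum]
      rw [Finset.sum_comm]
      have hk : ∀ k, ∑ j, (starRingEnd ℂ) (S j m) * (((N i j k : ℝ) : ℂ) * S k m)
          = ((starRingEnd ℂ) (S (σ i) m / S z m) * (starRingEnd ℂ) (S k m)) * S k m := by
        intro k
        have h3 : ∀ j, N i j k = N (σ i) k j := by
          intro j; rw [← hNT i]; rfl
        have h4 : ∑ j, ((N i j k : ℝ) : ℂ) * (starRingEnd ℂ) (S j m)
            = (starRingEnd ℂ) (S (σ i) m / S z m) * (starRingEnd ℂ) (S k m) := by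
          have h5 : (starRingEnd ℂ) (∑ j, ((N (σ i) k j : ℝ) : ℂ) * S j m)
              = (starRingEnd ℂ) ((S (σ i) m / S z m) * S k m) := by
            rw [heig (σ i) m k]
          rw [map_sum, map_mul] at h5
          rw [← h5]
          exact Finset.sum_congr rfl fun j _ => by
            rw [map_mul, Complex.conj_ofReal, h3 j]
        calc ∑ j, (starRingEnd ℂ) (S j m) * (((N i j k : ℝ) : ℂ) * S k m)
            = (∑ j, ((N i j k : ℝ) : ℂ) * (starRingEnd ℂ) (S j m)) * S k m := by
              rw [Finset.sum_mul]
              exact Finset.sum_congr rfl fun j _ => by ring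
          _ = _ := by rw [h4]
      simp_rw [hk]
      rw [hrC, Finset.mul_sum]
      exact Finset.sum_congr rfl fun k _ => by ring
    have hlam : (starRingEnd ℂ) (S (σ i) m / S z m) = S i m / S z m :=
      mul_right_cancel₀ hrC0 (wayB.symm.trans wayA)
    rw [map_div₀] at hlam
    have hz1 : (starRingEnd ℂ) (S z m) ≠ 0 := by
      simpa using hz m
    rw [div_eq_div_iff hz1 (hz m)] at hlam
    exact hlam
  -- ∑_j S (σ j) m * S j m = 1
  have hT : ∀ m, ∑ j, S (σ j) m * S j m = 1 := by
    intro m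
    have : ∀ j, S (σ j) m * S j m = S (σ m) j * S j m := by
      intro j
      rw [key j m, hsym j (σ m)]
    simp_rw [this]
    simpa using horth m m
  -- Step 2: S z m is real (column norm is 1)
  have step2 : ∀ m, (starRingEnd ℂ) (S z m) = S z m := by
    intro m
    set r : ℝ := ∑ j, Complex.normSq (S j m) with hr
    have hsum : (r : ℂ) * S z m = (starRingEnd ℂ) (S z m) := by
      have h1 : (r : ℂ) = ∑ j, (starRingEnd ℂ) (S j m) * S j m := by
        rw [hr]; push_cast
        exact Finset.sum_congr rfl fun j _ => Complex.normSq_eq_conj_mul_self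
      have h2 : ∀ j, (starRingEnd ℂ) (S j m) * S z m
          = S (σ j) m * (starRingEnd ℂ) (S z m) := by
        intro j
        have := step1 (σ j) m
        rwa [hσ] at this
      calc (r : ℂ) * S z m = ∑ j, (starRingEnd ℂ) (S j m) * S j m * S z m := by
            rw [h1, Finset.sum_mul]
        _ = ∑ j, S (σ j) m * (starRingEnd ℂ) (S z m) * S j m := by
            exact Finset.sum_congr rfl fun j _ => by
              rw [mul_right_comm, h2 j]
        _ = (starRingEnd ℂ) (S z m) * ∑ j, S (σ j) m * S j m := by
            rw [Finset.mul_sum]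
            exact Finset.sum_congr rfl fun j _ => by ring
        _ = (starRingEnd ℂ) (S z m) := by rw [hT m, mul_one]
    have habs : ‖(r : ℂ) * S z m‖ = ‖S z m‖ := by
      rw [hsum, Complex.norm_conj]
    rw [norm_mul] at habs
    have hSzabs : ‖S z m‖ ≠ 0 := by
      simpa using hz m
    have hrnn : 0 ≤ r := Finset.sum_nonneg fun j _ => Complex.normSq_nonneg _
    have hr1 : r = 1 := by
      have h' : ‖(r : ℂ)‖ = 1 := mul_right_cancel₀ hSzabs (by rw [one_mul]; exact habs)
      rwa [Complex.norm_real, Real.norm_of_nonneg hrnn] at h'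
    have : (r : ℂ) = 1 := by exact_mod_cast hr1
    rw [this, one_mul] at hsum
    exact hsum.symm
  -- conclude the first part
  have main : ∀ i m, S (σ i) m = starRingEnd ℂ (S i m) := by
    intro i m
    have h := step1 i m
    rw [step2 m] at h
    have h2 : (starRingEnd ℂ) (S (σ i) m) = S i m := mul_right_cancel₀ (hz m) h
    have := congrArg (starRingEnd ℂ) h2
    rwa [Complex.conj_conj] at this
  refine ⟨main, ?_⟩
  ext i l
  have : ∀ j, S i j * (starRingEnd ℂ) (S l j) = S (σ l) j * S j i := by
    intro j
    rw [← main l j, hsym i j]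
    ring
  rw [Matrix.mul_apply]
  simp only [Matrix.conjTranspose_apply, Matrix.one_apply]
  calc ∑ j, S i j * star (S l j) = ∑ j, S (σ l) j * S j i := by
        exact Finset.sum_congr rfl fun j _ => this j
    _ = if l = i then 1 else 0 := horth l i
    _ = if i = l then 1 else 0 := by by_cases h : i = l <;> simp [h, Ne.symm, eq_comm]
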